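/- For every integer x ≥ 1, the Mertens function satisfies M(x) = 2 − Σ_{k=1}^{x} Σ_{i=1}^{⌊√k⌋} Σ_{j=1}^{⌊√k⌋} μ(i)·μ(j)·[i·j divides k], where [i·j divides k] is 1 if i·j divides k and 0 otherwise. -/

import Mathlib

open ArithmeticFunction Finset

noncomputable def Mertens (x : ℝ) : ℤ := ∑ k ∈ Finset.Icc 1 ⌊x⌋₊, moebius k

noncomputable def Nplus (x : ℝ) : ℕ := ((Finset.Icc 1 ⌊x⌋₊).filter (fun n => moebius n = 1)).card

noncomputable def Nminus (x : ℝ) : ℕ := ((Finset.Icc 1 ⌊x⌋₊).filter (fun n => moebius n = -1)).card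

noncomputable def Nzero (x : ℝ) : ℕ := ((Finset.Icc 1 ⌊x⌋₊).filter (fun n => moebius n = 0)).card

noncomputable def Qsf (x : ℝ) : ℕ := ((Finset.Icc 1 ⌊x⌋₊).filter (fun n => moebius n ≠ 0)).card


lemma aux_sum_div (n : ℕ) : ∑ d ∈ n.divisors, (moebius d : ℤ) = if n = 1 then 1 else 0 := by
  have := ArithmeticFunction.coe_zeta_mul_apply (f := (moebius : ArithmeticFunction ℤ)) (x := n)
  rw [ArithmeticFunction.coe_zeta_mul_moebius] at this
  rw [← this, ArithmeticFunction.one_apply]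

lemma aux_inner (k i : ℕ) (hk : 1 ≤ k) (hi : 1 ≤ i) :
    ∑ j ∈ Icc 1 k, (moebius j : ℤ) * (if i * j ∣ k then 1 else 0)
      = if i = k then 1 else 0 := by
  by_cases hik : i ∣ k
  · have hdvd : ∀ j : ℕ, (i * j ∣ k ↔ j ∣ k / i) := fun j => (Nat.dvd_div_iff_mul_dvd hik).symm
    have h1 : ∑ j ∈ Icc 1 k, (moebius j : ℤ) * (if i * j ∣ k then 1 else 0)
        = ∑ j ∈ (Icc 1 k).filter (· ∣ k / i), (moebius j : ℤ) := by
      rw [Finset.sum_filter]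
      exact Finset.sum_congr rfl fun j _ => by simp [hdvd j, mul_ite]
    have hki : k / i ≠ 0 := by
      have h := Nat.le_of_dvd (by omega) hik
      exact Nat.div_ne_zero_iff.mpr ⟨(by omega : i ≠ 0), h⟩
    have hfil : (Icc 1 k).filter (· ∣ k / i) = (k / i).divisors := by
      ext d
      simp only [Finset.mem_filter, Finset.mem_Icc, Nat.mem_divisors]
      constructor
      · rintro ⟨_, h⟩; exact ⟨h, hki⟩
      · rintro ⟨h, _⟩
        refine ⟨⟨Nat.pos_of_dvd_of_pos h (Nat.pos_of_ne_zero hki), ?_⟩, h⟩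
        exact le_trans (Nat.le_of_dvd (Nat.pos_of_ne_zero hki) h) (Nat.div_le_self k i)
    rw [h1, hfil, aux_sum_div]
    have heq : k / i = 1 ↔ i = k := by
      constructor
      · intro h
        have hmul := Nat.div_mul_cancel hik
        rw [h, one_mul] at hmul
        omega
      · rintro rfl; exact Nat.div_self (by omega)
    simp [heq]
  · have hz : ∀ j ∈ Icc 1 k, (moebius j : ℤ) * (if i * j ∣ k then 1 else 0) = 0 := by
      intro j _
      have : ¬ (i * j ∣ k) := fun h => hik (dvd_trans (Dvd.intro j rfl) h)
      simp [this]
    rw [Finset.sum_eq_zero hz]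
    have : i ≠ k := fun h => hik (h ▸ dvd_refl k)
    simp [this]

lemma aux_S (k : ℕ) (hk : 1 ≤ k) :
    ∑ i ∈ Icc 1 (Nat.sqrt k), ∑ j ∈ Icc 1 (Nat.sqrt k),
        (moebius i : ℤ) * moebius j * (if (i * j) ∣ k then 1 else 0)
      = (if k = 1 then 2 else 0) - moebius k := by
  set s := Nat.sqrt k with hs
  have hs1 : 1 ≤ s := Nat.sqrt_pos.mpr (by omega)
  have hsk : s ≤ k := Nat.sqrt_le_self k
  set F : ℕ → ℕ → ℤ := fun i j => (moebius i : ℤ) * moebius j * (if (i * j) ∣ k then 1 else 0)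
    with hF
  -- full sum = μ k
  have hrow : ∀ i, 1 ≤ i → ∑ j ∈ Icc 1 k, F i j = (moebius i : ℤ) * (if i = k then 1 else 0) := by
    intro i hi
    rw [← aux_inner k i hk hi, Finset.mul_sum]
    exact Finset.sum_congr rfl fun j _ => by ring
  have hfull : ∑ i ∈ Icc 1 k, ∑ j ∈ Icc 1 k, F i j = moebius k := by
    have : ∑ i ∈ Icc 1 k, ∑ j ∈ Icc 1 k, F i j
        = ∑ i ∈ Icc 1 k, (moebius i : ℤ) * (if i = k then 1 else 0) := by
      refine Finset.sum_congr rfl fun i hi => hrow i (Finset.mem_Icc.mp hi).1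
    rw [this, Finset.sum_eq_single_of_mem k (by simp [Finset.mem_Icc, hk])
      (fun b _ hb => by simp [hb])]
    simp
  -- B
  have hB : ∑ i ∈ Icc 1 s, ∑ j ∈ Icc 1 k, F i j = if k = 1 then 1 else 0 := by
    have : ∑ i ∈ Icc 1 s, ∑ j ∈ Icc 1 k, F i j
        = ∑ i ∈ Icc 1 s, (moebius i : ℤ) * (if i = k then 1 else 0) := by
      refine Finset.sum_congr rfl fun i hi => hrow i (Finset.mem_Icc.mp hi).1
    rw [this]
    by_cases h1 : k = 1
    · subst h1
      simp [hs]
    · have hsk' : s < k := by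
        have := Nat.sqrt_lt_self (by omega : 1 < k)
        omega
      have : ∀ i ∈ Icc 1 s, (moebius i : ℤ) * (if i = k then 1 else 0) = 0 := by
        intro i hi
        have : i ≠ k := by
          have := (Finset.mem_Icc.mp hi).2; omega
        simp [this]
      rw [Finset.sum_eq_zero this]
      simp [h1]
  -- corner: both > s gives zero
  have hC : ∑ i ∈ Ioc s k, ∑ j ∈ Ioc s k, F i j = 0 := by
    refine Finset.sum_eq_zero fun i hi => Finset.sum_eq_zero fun j hj => ?_
    have hi' := Finset.mem_Ioc.mp hi
    have hj' := Finset.mem_Ioc.mp hj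
    have : ¬ (i * j ∣ k) := by
      intro h
      have hle : i * j ≤ k := Nat.le_of_dvd (by omega) h
      have h1 : s + 1 ≤ i := hi'.1
      have h2 : s + 1 ≤ j := hj'.1
      have h3 : k < (s + 1) * (s + 1) := Nat.lt_succ_sqrt k
      have : (s + 1) * (s + 1) ≤ i * j := Nat.mul_le_mul h1 h2
      omega
    simp [hF, this]
  -- split
  have hsplit : Icc 1 k = Icc 1 s ∪ Ioc s k := by
    ext a
    simp only [Finset.mem_Icc, Finset.mem_Ioc, Finset.mem_union]
    omega
  have hdisj : Disjoint (Icc 1 s) (Ioc s k) := by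
    rw [Finset.disjoint_left]
    intro a ha hb
    have := (Finset.mem_Icc.mp ha).2
    have := (Finset.mem_Ioc.mp hb).1
    omega
  have hsymm : ∀ i j, F i j = F j i := by
    intro i j; simp [hF, mul_comm i j]; ring_nf
  have key : ∑ i ∈ Icc 1 s, ∑ j ∈ Icc 1 s, F i j
      = 2 * (if k = 1 then 1 else 0) - moebius k := by
    have e1 : ∑ i ∈ Icc 1 k, ∑ j ∈ Icc 1 k, F i j
        = ∑ i ∈ Icc 1 s, ∑ j ∈ Icc 1 k, F i j + ∑ i ∈ Ioc s k, ∑ j ∈ Icc 1 k, F i j := by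
      rw [hsplit, Finset.sum_union hdisj]
    have e2 : ∑ i ∈ Ioc s k, ∑ j ∈ Icc 1 k, F i j
        = ∑ i ∈ Ioc s k, ∑ j ∈ Icc 1 s, F i j + ∑ i ∈ Ioc s k, ∑ j ∈ Ioc s k, F i j := by
      rw [← Finset.sum_add_distrib]
      refine Finset.sum_congr rfl fun i _ => ?_
      rw [hsplit, Finset.sum_union hdisj]
    have e3 : ∑ i ∈ Ioc s k, ∑ j ∈ Icc 1 s, F i j
        = ∑ j ∈ Icc 1 s, ∑ i ∈ Ioc s k, F i j := Finset.sum_comm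
    have e4 : ∑ j ∈ Icc 1 s, ∑ i ∈ Ioc s k, F i j
        = ∑ i ∈ Icc 1 s, ∑ j ∈ Ioc s k, F i j := by
      refine Finset.sum_congr rfl fun a _ => Finset.sum_congr rfl fun b _ => hsymm b a
    have e5 : ∑ i ∈ Icc 1 s, ∑ j ∈ Icc 1 k, F i j
        = ∑ i ∈ Icc 1 s, ∑ j ∈ Icc 1 s, F i j + ∑ i ∈ Icc 1 s, ∑ j ∈ Ioc s k, F i j := by
      rw [← Finset.sum_add_distrib]
      refine Finset.sum_congr rfl fun i _ => ?_
      rw [hsplit, Finset.sum_union hdisj]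
    have := hfull
    rw [e1, e2, e3, e4, hC, e5] at this
    rw [hB] at e5
    -- from: (S + X) + (X + 0) = μ k, and S + X = B
    have hX : ∑ i ∈ Icc 1 s, ∑ j ∈ Ioc s k, F i j
        = (if k = 1 then 1 else 0) - ∑ i ∈ Icc 1 s, ∑ j ∈ Icc 1 s, F i j := by
      linarith [e5.symm]
    rw [hX] at this
    linarith
  rw [key]
  by_cases h1 : k = 1 <;> simp [h1]

theorem stmt9 (x : ℕ) (hx : 1 ≤ x) :
    (∑ k ∈ Finset.Icc 1 x, moebius k) =
      2 - ∑ k ∈ Finset.Icc 1 x, ∑ i ∈ Finset.Icc 1 (Nat.sqrt k), ∑ j ∈ Finset.Icc 1 (Nat.sqrt k),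
        moebius i * moebius j * (if (i * j) ∣ k then 1 else 0) := by
  have h1 : ∑ k ∈ Finset.Icc 1 x, ∑ i ∈ Finset.Icc 1 (Nat.sqrt k), ∑ j ∈ Finset.Icc 1 (Nat.sqrt k),
        (moebius i : ℤ) * moebius j * (if (i * j) ∣ k then 1 else 0)
      = ∑ k ∈ Finset.Icc 1 x, ((if k = 1 then 2 else 0) - (moebius k : ℤ)) := by
    refine Finset.sum_congr rfl fun k hk => aux_S k (Finset.mem_Icc.mp hk).1
  rw [h1, Finset.sum_sub_distrib]
  have h2 : ∑ k ∈ Finset.Icc 1 x, (if k = 1 then (2:ℤ) else 0) = 2 := by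
    rw [Finset.sum_ite_eq' (Icc 1 x) 1 (fun _ => (2:ℤ))]
    simp [Finset.mem_Icc, hx]
  rw [h2]
  ring
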